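/- arXiv:2107.01242 — 2 statements merged into one kernel-verified Lean document; each statement's English description precedes it below -/
import Mathlib

section
/- For compact operators S and T on a separable Hilbert space, the (j+k)-th singular value of S+T is at most the sum of the j-th singular value of S and the k-th singular value of T, i.e., μ_{j+k}(S+T) ≤ μ_j(S) + μ_k(T). -/
open Filter Topology

variable {H : Type*} [NormedAddCommGroup H] [InnerProductSpace ℂ H] [CompleteSpace H]

/-- The `j`-th singular value of a bounded operator (approximation number):
for compact operators this is the `(j+1)`-th eigenvalue of `|T|` in decreasing order. -/
noncomputable def mu (T : H →L[ℂ] H) (j : ℕ) : ℝ :=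
  sInf {c : ℝ | ∃ F : H →L[ℂ] H, FiniteDimensional ℂ (LinearMap.range F.toLinearMap) ∧
    Module.finrank ℂ (LinearMap.range F.toLinearMap) ≤ j ∧ c = ‖T - F‖}

/-- Ky Fan's inequality for singular values: `μ_{j+k}(S+T) ≤ μ_j(S) + μ_k(T)`. -/
theorem singularValue_add_le [SecondCountableTopology H]
    (S T : H →L[ℂ] H) (hS : IsCompactOperator ⇑S) (hT : IsCompactOperator ⇑T) (j k : ℕ) :
    mu (S + T) (j + k) ≤ mu S j + mu T k := by
  have hbdd : ∀ (A : H →L[ℂ] H) (m : ℕ), BddBelow {c : ℝ | ∃ F : H →L[ℂ] H,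
      FiniteDimensional ℂ (LinearMap.range F.toLinearMap) ∧
      Module.finrank ℂ (LinearMap.range F.toLinearMap) ≤ m ∧ c = ‖A - F‖} := by
    intro A m
    exact ⟨0, fun c ⟨F, _, _, hc⟩ => hc ▸ norm_nonneg _⟩
  have hne : ∀ (A : H →L[ℂ] H) (m : ℕ), Set.Nonempty {c : ℝ | ∃ F : H →L[ℂ] H,
      FiniteDimensional ℂ (LinearMap.range F.toLinearMap) ∧
      Module.finrank ℂ (LinearMap.range F.toLinearMap) ≤ m ∧ c = ‖A - F‖} := by
    intro A m
    have h0 : LinearMap.range (0 : H →L[ℂ] H).toLinearMap = ⊥ := by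
      rw [show ((0 : H →L[ℂ] H).toLinearMap) = 0 from rfl, LinearMap.range_zero]
    refine ⟨‖A - 0‖, 0, ?_, ?_, rfl⟩
    · rw [h0]; infer_instance
    · rw [h0]; simpa using Nat.zero_le m
  have key : ∀ a ∈ {c : ℝ | ∃ F : H →L[ℂ] H,
      FiniteDimensional ℂ (LinearMap.range F.toLinearMap) ∧
      Module.finrank ℂ (LinearMap.range F.toLinearMap) ≤ j ∧ c = ‖S - F‖},
      ∀ b ∈ {c : ℝ | ∃ F : H →L[ℂ] H,
      FiniteDimensional ℂ (LinearMap.range F.toLinearMap) ∧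
      Module.finrank ℂ (LinearMap.range F.toLinearMap) ≤ k ∧ c = ‖T - F‖},
      mu (S + T) (j + k) ≤ a + b := by
    rintro a ⟨F, hFfin, hFrank, rfl⟩ b ⟨G, hGfin, hGrank, rfl⟩
    have hsub : LinearMap.range (F + G).toLinearMap ≤
        LinearMap.range F.toLinearMap ⊔ LinearMap.range G.toLinearMap := by
      rintro x ⟨y, rfl⟩
      exact Submodule.mem_sup.mpr ⟨F y, ⟨y, rfl⟩, G y, ⟨y, rfl⟩, rfl⟩
    haveI : FiniteDimensional ℂ
        ↥(LinearMap.range F.toLinearMap ⊔ LinearMap.range G.toLinearMap) := by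
      exact Submodule.finiteDimensional_sup _ _
    haveI hfin : FiniteDimensional ℂ (LinearMap.range (F + G).toLinearMap) :=
      Submodule.finiteDimensional_of_le hsub
    have hrank : Module.finrank ℂ (LinearMap.range (F + G).toLinearMap) ≤ j + k :=
      le_trans (Submodule.finrank_mono hsub)
        (le_trans (Submodule.finrank_add_le_finrank_add_finrank _ _)
          (add_le_add hFrank hGrank))
    have hmem : ‖(S + T) - (F + G)‖ ∈ {c : ℝ | ∃ F' : H →L[ℂ] H,
        FiniteDimensional ℂ (LinearMap.range F'.toLinearMap) ∧
        Module.finrank ℂ (LinearMap.range F'.toLinearMap) ≤ j + k ∧ c = ‖(S + T) - F'‖} :=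
      ⟨F + G, hfin, hrank, rfl⟩
    refine le_trans (csInf_le (hbdd _ _) hmem) ?_
    have : (S + T) - (F + G) = (S - F) + (T - G) := by abel
    rw [this]
    exact norm_add_le _ _
  have h1 : mu (S + T) (j + k) - mu T k ≤ mu S j := by
    refine le_csInf (hne S j) fun a ha => ?_
    have h2 : mu (S + T) (j + k) - a ≤ mu T k :=
      le_csInf (hne T k) fun b hb => by linarith [key a ha b hb]
    linarith
  linarith
end

section
/- For a selfadjoint compact operator A on a Hilbert space, the positive and negative eigenvalue sequences satisfy the Ky Fan type inequality λ±_{j+k}(A+B) ≤ λ±_j(A) + λ±_k(B) for selfadjoint compact operators A, B and all j, k ≥ 0. -/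
open Filter Topology

variable {H : Type*} [NormedAddCommGroup H] [InnerProductSpace ℂ H] [CompleteSpace H]

/-- `λ⁺_j(A)`: the `j`-th eigenvalue (decreasing, with multiplicity) of the positive part
`A⁺ = (|A|+A)/2` of the selfadjoint operator `A`. -/
noncomputable def lamP (A : H →L[ℂ] H) (j : ℕ) : ℝ := mu (A⁺) j

/-- `λ⁻_j(A)`: the `j`-th eigenvalue (decreasing, with multiplicity) of the negative part
`A⁻ = (|A|-A)/2` of the selfadjoint operator `A`. -/
noncomputable def lamM (A : H →L[ℂ] H) (j : ℕ) : ℝ := mu (A⁻) j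


section KyFanAux

set_option linter.unusedSectionVars false
set_option maxHeartbeats 1000000

open RCLike
open scoped InnerProductSpace

lemma muSet_nonempty (T : H →L[ℂ] H) (j : ℕ) :
    Set.Nonempty {c : ℝ | ∃ F : H →L[ℂ] H, FiniteDimensional ℂ (LinearMap.range F.toLinearMap) ∧
      Module.finrank ℂ (LinearMap.range F.toLinearMap) ≤ j ∧ c = ‖T - F‖} := by
  have h0 : LinearMap.range (0 : H →L[ℂ] H).toLinearMap = ⊥ := by
    simp [ContinuousLinearMap.coe_zero]
  refine ⟨‖T - 0‖, 0, ?_, ?_, rfl⟩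
  · rw [h0]; infer_instance
  · rw [h0]; simp

lemma muSet_bddBelow (T : H →L[ℂ] H) (j : ℕ) :
    BddBelow {c : ℝ | ∃ F : H →L[ℂ] H, FiniteDimensional ℂ (LinearMap.range F.toLinearMap) ∧
      Module.finrank ℂ (LinearMap.range F.toLinearMap) ≤ j ∧ c = ‖T - F‖} := by
  refine ⟨0, fun c hc => ?_⟩
  obtain ⟨F, -, -, rfl⟩ := hc
  exact norm_nonneg _

lemma mu_le (T F : H →L[ℂ] H) (j : ℕ)
    (h1 : FiniteDimensional ℂ (LinearMap.range F.toLinearMap))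
    (h2 : Module.finrank ℂ (LinearMap.range F.toLinearMap) ≤ j) :
    mu T j ≤ ‖T - F‖ :=
  csInf_le (muSet_bddBelow T j) ⟨F, h1, h2, rfl⟩

lemma mu_nonneg (T : H →L[ℂ] H) (j : ℕ) : 0 ≤ mu T j :=
  le_csInf (muSet_nonempty T j) (fun c hc => by obtain ⟨F, -, -, rfl⟩ := hc; exact norm_nonneg _)

lemma mu_mono {S T : H →L[ℂ] H} (hS : 0 ≤ S) (hST : S ≤ T) (n : ℕ) :
    mu S n ≤ mu T n := by
  refine le_csInf (muSet_nonempty T n) ?_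
  rintro c ⟨F, hFfd, hFrk, rfl⟩
  have hc : (0:ℝ) ≤ ‖T - F‖ := norm_nonneg _
  set s : H →L[ℂ] H := CFC.sqrt S with hs_def
  have hs_nonneg : (0:H →L[ℂ] H) ≤ s := CFC.sqrt_nonneg (a := S)
  have hs_sa : IsSelfAdjoint s := IsSelfAdjoint.of_nonneg hs_nonneg
  have hss : ∀ ξ : H, s (s ξ) = S ξ := by
    intro ξ
    have h := CFC.sqrt_mul_sqrt_self S hS
    calc s (s ξ) = (s * s) ξ := rfl
      _ = S ξ := by rw [h]
  have hinner : ∀ u v : H, ⟪s u, v⟫_ℂ = ⟪u, s v⟫_ℂ := by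
    intro u v
    conv_lhs => rw [← hs_sa.adjoint_eq]
    exact ContinuousLinearMap.adjoint_inner_left s v u
  set K : Submodule ℂ H := LinearMap.ker F.toLinearMap with hK_def
  -- pointwise bound on ker F
  have hker : ∀ ζ ∈ K, ‖s ζ‖ ≤ Real.sqrt ‖T - F‖ * ‖ζ‖ := by
    intro ζ hζ
    have hFζ : F ζ = 0 := hζ
    have h1 : re ⟪S ζ, ζ⟫_ℂ = ‖s ζ‖ ^ 2 := by
      rw [← hss ζ, hinner (s ζ) ζ, inner_self_eq_norm_sq]
    have h2 : re ⟪S ζ, ζ⟫_ℂ ≤ re ⟪T ζ, ζ⟫_ℂ := by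
      have hpos := (ContinuousLinearMap.nonneg_iff_isPositive (T - S)).mp (sub_nonneg.mpr hST)
      have h0 := hpos.inner_nonneg_left ζ
      simp only [ContinuousLinearMap.sub_apply, inner_sub_left, map_sub] at h0
      have h0' := (RCLike.le_iff_re_im.mp h0).1
      simp only [map_sub, map_zero] at h0'
      linarith
    have h3 : re ⟪T ζ, ζ⟫_ℂ ≤ ‖T - F‖ * ‖ζ‖ ^ 2 := by
      have he : (T - F) ζ = T ζ := by simp [ContinuousLinearMap.sub_apply, hFζ]
      calc re ⟪T ζ, ζ⟫_ℂ = re ⟪(T - F) ζ, ζ⟫_ℂ := by rw [he]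
        _ ≤ ‖⟪(T - F) ζ, ζ⟫_ℂ‖ := RCLike.re_le_norm _
        _ ≤ ‖(T - F) ζ‖ * ‖ζ‖ := norm_inner_le_norm _ _
        _ ≤ (‖T - F‖ * ‖ζ‖) * ‖ζ‖ := by
            gcongr
            exact (T - F).le_opNorm ζ
        _ = ‖T - F‖ * ‖ζ‖ ^ 2 := by ring
    have h4 : ‖s ζ‖ ^ 2 ≤ ‖T - F‖ * ‖ζ‖ ^ 2 := by linarith
    calc ‖s ζ‖ = Real.sqrt (‖s ζ‖ ^ 2) := (Real.sqrt_sq (norm_nonneg _)).symm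
      _ ≤ Real.sqrt (‖T - F‖ * ‖ζ‖ ^ 2) := Real.sqrt_le_sqrt h4
      _ = Real.sqrt ‖T - F‖ * ‖ζ‖ := by
          rw [Real.sqrt_mul hc, Real.sqrt_sq (norm_nonneg _)]
  haveI : CompleteSpace K := F.isClosed_ker.completeSpace_coe
  set W : Submodule ℂ H := Kᗮ with hW_def
  have hW_perp : Wᗮ = K := Submodule.orthogonal_orthogonal K
  -- W is finite-dimensional of finrank ≤ n
  have hinj0 : Function.Injective (F.toLinearMap.domRestrict W) := by
    intro a b hab
    have hmem : (a:H) - b ∈ K := by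
      have : F ((a:H) - b) = 0 := by
        simp only [map_sub]
        simpa using sub_eq_zero.mpr hab
      exact this
    have hmemW : (a:H) - b ∈ W := sub_mem a.2 b.2
    have := Submodule.disjoint_def.mp (Submodule.orthogonal_disjoint K) _ hmem hmemW
    exact Subtype.ext (sub_eq_zero.mp this)
  set e : W →ₗ[ℂ] LinearMap.range F.toLinearMap :=
    (F.toLinearMap.domRestrict W).codRestrict (LinearMap.range F.toLinearMap)
      (fun x => LinearMap.mem_range_self _ _) with he_def
  have hinj : Function.Injective e := by
    intro a b hab
    exact hinj0 (congrArg Subtype.val hab)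
  haveI hWfd : FiniteDimensional ℂ W := Module.Finite.of_injective e hinj
  have hWrk : Module.finrank ℂ W ≤ n :=
    le_trans (LinearMap.finrank_le_finrank_of_injective hinj) hFrk
  set V : Submodule ℂ H := W.map s.toLinearMap with hV_def
  have hVrk : Module.finrank ℂ V ≤ n := le_trans (Submodule.finrank_map_le _ _) hWrk
  set P : H →L[ℂ] H := V.subtypeL.comp (V.orthogonalProjectionOnto) with hP_def
  have hPmem : ∀ η : H, P η ∈ V := fun η => (V.orthogonalProjectionOnto η).2
  have hPsub : ∀ η : H, η - P η ∈ Vᗮ := fun η => V.sub_starProjection_mem_orthogonal η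
  set G : H →L[ℂ] H := s * P * s with hG_def
  have hGrange : LinearMap.range G.toLinearMap ≤ V.map s.toLinearMap := by
    rintro y ⟨x, rfl⟩
    exact ⟨P (s x), hPmem _, rfl⟩
  haveI : FiniteDimensional ℂ (LinearMap.range G.toLinearMap) :=
    Submodule.finiteDimensional_of_le hGrange
  have hGrk : Module.finrank ℂ (LinearMap.range G.toLinearMap) ≤ n :=
    le_trans (Submodule.finrank_mono hGrange) (le_trans (Submodule.finrank_map_le _ _) hVrk)
  have claim1 : ∀ η ∈ Vᗮ, ‖s η‖ ≤ Real.sqrt ‖T - F‖ * ‖η‖ := by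
    intro η hη
    have hζK : s η ∈ K := by
      rw [← hW_perp, Submodule.mem_orthogonal]
      intro w hw
      rw [(hinner w η).symm]
      exact (Submodule.mem_orthogonal V η).mp hη (s w) ⟨w, hw, rfl⟩
    have hkey := hker (s η) hζK
    have h5 : ‖s η‖ ^ 2 = re ⟪η, s (s η)⟫_ℂ := by
      rw [← hinner η (s η), inner_self_eq_norm_sq]
    have h6 : re ⟪η, s (s η)⟫_ℂ ≤ ‖η‖ * (Real.sqrt ‖T - F‖ * ‖s η‖) := by
      calc re ⟪η, s (s η)⟫_ℂ ≤ ‖⟪η, s (s η)⟫_ℂ‖ := RCLike.re_le_norm _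
        _ ≤ ‖η‖ * ‖s (s η)‖ := norm_inner_le_norm _ _
        _ ≤ ‖η‖ * (Real.sqrt ‖T - F‖ * ‖s η‖) := by gcongr
    have h7 : ‖s η‖ ^ 2 ≤ ‖η‖ * (Real.sqrt ‖T - F‖ * ‖s η‖) := by
      rw [h5]; exact h6
    rcases eq_or_lt_of_le (norm_nonneg (s η)) with h0 | h0
    · rw [← h0]; positivity
    · nlinarith [Real.sqrt_nonneg ‖T - F‖, norm_nonneg η]
  have hSG : ‖S - G‖ ≤ ‖T - F‖ := by
    refine ContinuousLinearMap.opNorm_le_bound _ hc (fun ξ => ?_)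
    have happ : (S - G) ξ = s (s ξ - P (s ξ)) := by
      simp only [hG_def, ContinuousLinearMap.sub_apply, ContinuousLinearMap.mul_apply, map_sub,
        hss]
    set η' : H := s ξ - P (s ξ) with hη'_def
    have hη'V : η' ∈ Vᗮ := hPsub (s ξ)
    have hη'norm : ‖η'‖ ≤ Real.sqrt ‖T - F‖ * ‖ξ‖ := by
      have hzero : ⟪η', P (s ξ)⟫_ℂ = 0 :=
        (Submodule.mem_orthogonal' V η').mp hη'V _ (hPmem _)
      have hinner_eq : ⟪η', η'⟫_ℂ = ⟪η', s ξ⟫_ℂ := by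
        have h := inner_sub_right (𝕜 := ℂ) η' (s ξ) (P (s ξ))
        rw [← hη'_def] at h
        rw [h, hzero, sub_zero]
      have h8 : ‖η'‖ ^ 2 = re ⟪s η', ξ⟫_ℂ := by
        rw [← inner_self_eq_norm_sq (𝕜 := ℂ) η', hinner_eq, ← hinner η' ξ]
      have h9 : re ⟪s η', ξ⟫_ℂ ≤ (Real.sqrt ‖T - F‖ * ‖η'‖) * ‖ξ‖ := by
        calc re ⟪s η', ξ⟫_ℂ ≤ ‖⟪s η', ξ⟫_ℂ‖ := RCLike.re_le_norm _
          _ ≤ ‖s η'‖ * ‖ξ‖ := norm_inner_le_norm _ _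
          _ ≤ (Real.sqrt ‖T - F‖ * ‖η'‖) * ‖ξ‖ := by
              gcongr
              exact claim1 η' hη'V
      have h10 : ‖η'‖ ^ 2 ≤ (Real.sqrt ‖T - F‖ * ‖η'‖) * ‖ξ‖ := by rw [h8]; exact h9
      rcases eq_or_lt_of_le (norm_nonneg η') with h0 | h0
      · rw [← h0]; positivity
      · nlinarith [Real.sqrt_nonneg ‖T - F‖, norm_nonneg ξ]
    calc ‖(S - G) ξ‖ = ‖s η'‖ := by rw [happ]
      _ ≤ Real.sqrt ‖T - F‖ * ‖η'‖ := claim1 η' hη'V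
      _ ≤ Real.sqrt ‖T - F‖ * (Real.sqrt ‖T - F‖ * ‖ξ‖) := by gcongr
      _ = ‖T - F‖ * ‖ξ‖ := by rw [← mul_assoc, Real.mul_self_sqrt hc]
  calc mu S n ≤ ‖S - G‖ := mu_le _ _ _ inferInstance hGrk
    _ ≤ ‖T - F‖ := hSG

lemma mu_subadd (X Z : H →L[ℂ] H) (j k : ℕ) :
    mu (X + Z) (j + k) ≤ mu X j + mu Z k := by
  have key : ∀ b ∈ {c : ℝ | ∃ F : H →L[ℂ] H,
        FiniteDimensional ℂ (LinearMap.range F.toLinearMap) ∧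
        Module.finrank ℂ (LinearMap.range F.toLinearMap) ≤ j ∧ c = ‖X - F‖},
      ∀ d ∈ {c : ℝ | ∃ F : H →L[ℂ] H,
        FiniteDimensional ℂ (LinearMap.range F.toLinearMap) ∧
        Module.finrank ℂ (LinearMap.range F.toLinearMap) ≤ k ∧ c = ‖Z - F‖},
      mu (X + Z) (j + k) ≤ b + d := by
    rintro b ⟨F, hFfd, hFrk, rfl⟩ d ⟨G, hGfd, hGrk, rfl⟩
    have hr : LinearMap.range (F + G).toLinearMap ≤
        LinearMap.range F.toLinearMap ⊔ LinearMap.range G.toLinearMap := by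
      rintro y ⟨x, rfl⟩
      exact Submodule.add_mem_sup (LinearMap.mem_range_self _ x) (LinearMap.mem_range_self _ x)
    haveI := Submodule.finiteDimensional_of_le hr
    have hrk : Module.finrank ℂ (LinearMap.range (F + G).toLinearMap) ≤ j + k :=
      le_trans (Submodule.finrank_mono hr)
        (le_trans (Submodule.finrank_add_le_finrank_add_finrank _ _) (add_le_add hFrk hGrk))
    calc mu (X + Z) (j + k) ≤ ‖(X + Z) - (F + G)‖ := mu_le _ _ _ ‹_› hrk
      _ ≤ ‖X - F‖ + ‖Z - G‖ := by
          have he : (X + Z) - (F + G) = (X - F) + (Z - G) := by abel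
          rw [he]; exact norm_add_le _ _
  have h2 : ∀ b ∈ {c : ℝ | ∃ F : H →L[ℂ] H,
        FiniteDimensional ℂ (LinearMap.range F.toLinearMap) ∧
        Module.finrank ℂ (LinearMap.range F.toLinearMap) ≤ j ∧ c = ‖X - F‖},
      mu (X + Z) (j + k) - b ≤ mu Z k := fun b hb =>
    le_csInf (muSet_nonempty Z k) fun d hd => by have := key b hb d hd; linarith
  have h3 : mu (X + Z) (j + k) - mu Z k ≤ mu X j :=
    le_csInf (muSet_nonempty X j) fun b hb => by have := h2 b hb; linarith
  linarith

lemma mu_conj (C Y D : H →L[ℂ] H) (hC : ‖C‖ ≤ 1) (hD : ‖D‖ ≤ 1) (n : ℕ) :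
    mu (C * Y * D) n ≤ mu Y n := by
  refine le_csInf (muSet_nonempty Y n) ?_
  rintro c ⟨F, hFfd, hFrk, rfl⟩
  have hr : LinearMap.range (C * F * D).toLinearMap ≤
      (LinearMap.range F.toLinearMap).map C.toLinearMap := by
    rintro y ⟨x, rfl⟩
    exact ⟨F (D x), LinearMap.mem_range_self _ _, rfl⟩
  haveI := Submodule.finiteDimensional_of_le hr
  have hrk : Module.finrank ℂ (LinearMap.range (C * F * D).toLinearMap) ≤ n :=
    le_trans (Submodule.finrank_mono hr)
      (le_trans (Submodule.finrank_map_le _ _) hFrk)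
  calc mu (C * Y * D) n ≤ ‖C * Y * D - C * F * D‖ := mu_le _ _ _ ‹_› hrk
    _ ≤ ‖Y - F‖ := by
        have he : C * Y * D - C * F * D = C * (Y - F) * D := by rw [mul_sub, sub_mul]
        rw [he]
        have h1 : ‖C * (Y - F) * D‖ ≤ ‖C * (Y - F)‖ * ‖D‖ := norm_mul_le _ _
        have h2 : ‖C * (Y - F)‖ ≤ ‖C‖ * ‖Y - F‖ := norm_mul_le _ _
        nlinarith [norm_nonneg (Y - F), norm_nonneg (C * (Y - F)), norm_nonneg C, norm_nonneg D]

lemma mu_le_norm (T : H →L[ℂ] H) (j : ℕ) : mu T j ≤ ‖T‖ := by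
  have h0 : LinearMap.range (0 : H →L[ℂ] H).toLinearMap = ⊥ := by
    simp [ContinuousLinearMap.coe_zero]
  have h1 : FiniteDimensional ℂ (LinearMap.range (0 : H →L[ℂ] H).toLinearMap) := by
    rw [h0]; infer_instance
  have h2 : Module.finrank ℂ (LinearMap.range (0 : H →L[ℂ] H).toLinearMap) ≤ j := by
    rw [h0]; simp
  simpa using mu_le T 0 j h1 h2

lemma mu_add_const (Z : H →L[ℂ] H) {ε : ℝ} (hε : 0 ≤ ε) (n : ℕ) :
    mu (Z + algebraMap ℝ (H →L[ℂ] H) ε) n ≤ mu Z n + ε := by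
  have h := mu_subadd Z (algebraMap ℝ (H →L[ℂ] H) ε) n 0
  have h0 : mu (algebraMap ℝ (H →L[ℂ] H) ε) 0 ≤ ε := by
    refine le_trans (mu_le_norm _ _) ?_
    rw [Algebra.algebraMap_eq_smul_one, norm_smul, Real.norm_eq_abs, abs_of_nonneg hε]
    calc ε * ‖(1 : H →L[ℂ] H)‖ ≤ ε * 1 := by
          refine mul_le_mul_of_nonneg_left ?_ hε
          rw [ContinuousLinearMap.one_def]
          exact ContinuousLinearMap.norm_id_le
      _ = ε := mul_one ε
  simp only [Nat.add_zero] at h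
  linarith

lemma keyP (A B : H →L[ℂ] H) (hA : IsSelfAdjoint A) (hB : IsSelfAdjoint B) (j k : ℕ) :
    mu ((A + B)⁺) (j + k) ≤ mu (A⁺) j + mu (B⁺) k := by
  refine le_of_forall_pos_le_add fun ε hε => ?_
  set x : H →L[ℂ] H := A + B with hx_def
  have hx : IsSelfAdjoint x := hA.add hB
  set Y : H →L[ℂ] H := A⁺ + B⁺ with hY_def
  have hxY : x ≤ Y := add_le_add (CFC.le_posPart hA) (CFC.le_posPart hB)
  set g : ℝ → ℝ := fun t => min (max (t / ε) 0) 1 with hg_def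
  have hgc : Continuous g := by
    rw [hg_def]; fun_prop
  have hg_mem : ∀ t : ℝ, 0 ≤ g t ∧ g t ≤ 1 := fun t =>
    ⟨le_min (le_max_right _ _) zero_le_one, min_le_right _ _⟩
  have hg_nonpos : ∀ t : ℝ, t ≤ 0 → g t = 0 := by
    intro t ht
    have h : max (t / ε) 0 = 0 := max_eq_right (div_nonpos_of_nonpos_of_nonneg ht hε.le)
    rw [hg_def]; simp only [h]; exact min_eq_left zero_le_one
  have hg_big : ∀ t : ℝ, ε ≤ t → g t = 1 := by
    intro t ht
    have h1 : (1:ℝ) ≤ t / ε := (one_le_div hε).mpr ht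
    rw [hg_def]; simp only
    rw [max_eq_left (le_trans zero_le_one h1)]
    exact min_eq_right h1
  have hpt : ∀ t : ℝ, t⁺ ≤ g t * t * g t + ε := by
    intro t
    have hgt0 : 0 ≤ g t * t * g t := by
      rcases le_or_gt t 0 with ht | ht
      · rw [hg_nonpos t ht]; simp
      · have := (hg_mem t).1; positivity
    rw [_root_.posPart_def]; change max t 0 ≤ _
    rcases le_or_gt t ε with ht | ht
    · have h : max t 0 ≤ ε := max_le ht hε.le
      linarith
    · rw [hg_big t ht.le, one_mul, mul_one]
      have h : max t 0 = t := max_eq_left (le_trans hε.le ht.le)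
      rw [h]; linarith
  set C : H →L[ℂ] H := cfc g x with hC_def
  have hC_sa : IsSelfAdjoint C := cfc_predicate g x
  have hCnorm : ‖C‖ ≤ 1 :=
    norm_cfc_le zero_le_one fun t _ => by
      rw [Real.norm_eq_abs, abs_le]
      exact ⟨le_trans (by norm_num) (hg_mem t).1, (hg_mem t).2⟩
  have hc1 : ContinuousOn (fun t : ℝ => g t * t) (spectrum ℝ x) :=
    (hgc.mul continuous_id).continuousOn
  have hc2 : ContinuousOn g (spectrum ℝ x) := hgc.continuousOn
  have hCxC : cfc (fun t : ℝ => g t * t * g t) x = C * x * C := by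
    rw [hC_def, cfc_mul (fun t : ℝ => g t * t) g x hc1 hc2,
      cfc_mul g (fun t : ℝ => t) x hc2 continuous_id.continuousOn, cfc_id' ℝ x hx]
  have h1 : x⁺ ≤ C * x * C + algebraMap ℝ (H →L[ℂ] H) ε := by
    rw [← hCxC, ← cfc_const ε x hx, CFC.posPart_def, cfcₙ_eq_cfc]
    rw [← cfc_add (a := x) (fun t : ℝ => g t * t * g t) (fun _ => ε)
      ((hgc.mul continuous_id).mul hgc).continuousOn continuousOn_const]
    exact cfc_mono fun t _ => hpt t
  have h2 : C * x * C ≤ C * Y * C := IsSelfAdjoint.conjugate_le_conjugate hxY hC_sa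
  have h3 : x⁺ ≤ C * Y * C + algebraMap ℝ (H →L[ℂ] H) ε :=
    h1.trans (add_le_add_left h2 _)
  calc mu (x⁺) (j + k) ≤ mu (C * Y * C + algebraMap ℝ (H →L[ℂ] H) ε) (j + k) :=
        mu_mono (CFC.posPart_nonneg x) h3 (j + k)
    _ ≤ mu (C * Y * C) (j + k) + ε := mu_add_const _ hε.le _
    _ ≤ mu Y (j + k) + ε := add_le_add_left (mu_conj C Y C hCnorm hCnorm _) _
    _ ≤ mu (A⁺) j + mu (B⁺) k + ε := add_le_add_left (mu_subadd _ _ _ _) _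


end KyFanAux

/-- Ky Fan inequality for positive/negative eigenvalues of selfadjoint compact operators:
`λ±_{j+k}(A+B) ≤ λ±_j(A) + λ±_k(B)`. -/
theorem lamPM_add_le [SecondCountableTopology H]
    (A B : H →L[ℂ] H) (hA : IsSelfAdjoint A) (hB : IsSelfAdjoint B)
    (hAc : IsCompactOperator ⇑A) (hBc : IsCompactOperator ⇑B) (j k : ℕ) :
    lamP (A + B) (j + k) ≤ lamP A j + lamP B k ∧
    lamM (A + B) (j + k) ≤ lamM A j + lamM B k := by
  constructor
  · exact keyP A B hA hB j k
  · have h := keyP (-A) (-B) hA.neg hB.neg j k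
    rw [show (-A) + (-B) = -(A + B) from (neg_add A B).symm] at h
    simp only [CFC.posPart_neg] at h
    exact h
end
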